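/- (Invariance of the Haberland pairing.) Let k ≥ 2 be an integer and define, for complex polynomials p(τ) = Σ_{i=0}^{k−2} p_i τ^i and q(τ) = Σ_{i=0}^{k−2} q_i τ^i of degree at most k−2, the pairing ⟨p, q⟩ = Σ_{i=0}^{k−2} (−1)^i · binom(k−2, i)^{−1} · p_i · q_{k−2−i}. Then for every g = (a b; c d) ∈ SL(2, ℤ): (i) the function (p|_{2−k} g)(τ) = (cτ+d)^{k−2}·p((aτ+b)/(cτ+d)) is again a polynomial in τ of degree at most k−2, and (ii) ⟨p|_{2−k} g, q|_{2−k} g⟩ = ⟨p, q⟩. -/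

import Mathlib

open Complex

/-- The Haberland pairing
`⟨p, q⟩ = Σ_{i=0}^{k−2} (−1)^i·binom(k−2,i)⁻¹·p_i·q_{k−2−i}` on polynomials of degree at
most `k−2`. -/
noncomputable def haberland (k : ℕ) (p q : Polynomial ℂ) : ℂ :=
  ∑ i ∈ Finset.range (k - 1),
    (-1 : ℂ) ^ i * ((Nat.choose (k - 2) i : ℂ))⁻¹ * p.coeff i * q.coeff (k - 2 - i)

open Polynomial Finset

noncomputable def hab (n : ℕ) (p q : ℂ[X]) : ℂ :=
  ∑ i ∈ Finset.range (n+1), (-1:ℂ)^i * ((n.choose i : ℂ))⁻¹ * p.coeff i * q.coeff (n - i)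

noncomputable def act (n : ℕ) (a b c d : ℂ) (p : ℂ[X]) : ℂ[X] :=
  ∑ i ∈ Finset.range (n+1),
    C (p.coeff i) * (C a * X + C b)^i * (C c * X + C d)^(n - i)

theorem act_natDegree_le (n : ℕ) (a b c d : ℂ) (p : ℂ[X]) :
    (act n a b c d p).natDegree ≤ n := by
  apply natDegree_sum_le_of_forall_le
  intro i hi
  simp only [Finset.mem_range] at hi
  calc (C (p.coeff i) * (C a * X + C b)^i * (C c * X + C d)^(n - i)).natDegree
      ≤ (C (p.coeff i) * (C a * X + C b)^i).natDegree + ((C c * X + C d)^(n-i)).natDegree :=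
        natDegree_mul_le
    _ ≤ ((C (p.coeff i)).natDegree + ((C a * X + C b)^i).natDegree) + ((C c * X + C d)^(n-i)).natDegree := by
        gcongr; exact natDegree_mul_le
    _ ≤ (0 + i * 1) + (n - i) * 1 := by
        gcongr
        · exact le_of_eq (natDegree_C _)
        · exact natDegree_pow_le.trans (by gcongr; exact natDegree_linear_le)
        · exact natDegree_pow_le.trans (by gcongr; exact natDegree_linear_le)
    _ ≤ n := by omega

theorem act_eval (n : ℕ) (a b c d : ℂ) (p : ℂ[X]) (hp : p.natDegree ≤ n)
    (τ : ℂ) (hτ : c * τ + d ≠ 0) :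
    (act n a b c d p).eval τ = (c * τ + d)^n * p.eval ((a * τ + b)/(c * τ + d)) := by
  rw [act, eval_finset_sum, eval_eq_sum_range' (lt_of_le_of_lt hp (Nat.lt_succ_self n)),
    Finset.mul_sum]
  apply Finset.sum_congr rfl
  intro i hi
  simp only [Finset.mem_range] at hi
  have hi' : i ≤ n := Nat.lt_succ_iff.mp hi
  simp only [eval_mul, eval_pow, eval_add, eval_C, eval_mul, eval_X]
  rw [div_pow, pow_sub₀ _ hτ hi']
  field_simp

theorem hab_sum_left {ι : Type*} (n : ℕ) (s : Finset ι) (f : ι → ℂ[X]) (q : ℂ[X]) :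
    hab n (∑ j ∈ s, f j) q = ∑ j ∈ s, hab n (f j) q := by
  simp only [hab, finset_sum_coeff, Finset.sum_mul, Finset.mul_sum]
  exact Finset.sum_comm

theorem hab_sum_right {ι : Type*} (n : ℕ) (s : Finset ι) (p : ℂ[X]) (f : ι → ℂ[X]) :
    hab n p (∑ j ∈ s, f j) = ∑ j ∈ s, hab n p (f j) := by
  simp only [hab, finset_sum_coeff, Finset.mul_sum]
  exact Finset.sum_comm

theorem hab_C_mul_left (n : ℕ) (r : ℂ) (p q : ℂ[X]) :
    hab n (C r * p) q = r * hab n p q := by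
  simp only [hab, coeff_C_mul, Finset.mul_sum]
  exact Finset.sum_congr rfl fun i _ => by ring

theorem hab_C_mul_right (n : ℕ) (r : ℂ) (p q : ℂ[X]) :
    hab n p (C r * q) = r * hab n p q := by
  simp only [hab, coeff_C_mul, Finset.mul_sum]
  exact Finset.sum_congr rfl fun i _ => by ring

theorem act_id (n : ℕ) (p : ℂ[X]) (hp : p.natDegree ≤ n) :
    act n 1 0 0 1 p = p := by
  conv_rhs => rw [p.as_sum_range' (n+1) (lt_of_le_of_lt hp (Nat.lt_succ_self n))]
  unfold act
  apply Finset.sum_congr rfl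
  intro i hi
  simp [C_mul_X_pow_eq_monomial]

theorem act_translate (n : ℕ) (t : ℂ) (p : ℂ[X]) (hp : p.natDegree ≤ n) :
    act n 1 t 0 1 p = p.comp (X + C t) := by
  conv_rhs => rw [p.as_sum_range' (n+1) (lt_of_le_of_lt hp (Nat.lt_succ_self n))]
  unfold act
  rw [Polynomial.comp, eval₂_finset_sum]
  apply Finset.sum_congr rfl
  intro i hi
  rw [← C_mul_X_pow_eq_monomial]
  simp [eval₂_mul, eval₂_pow]

theorem act_neg_one (n : ℕ) (p : ℂ[X]) (hp : p.natDegree ≤ n) :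
    act n (-1) 0 0 (-1) p = C ((-1)^n) * p := by
  conv_rhs => rw [p.as_sum_range' (n+1) (lt_of_le_of_lt hp (Nat.lt_succ_self n))]
  unfold act
  rw [Finset.mul_sum]
  apply Finset.sum_congr rfl
  intro i hi
  simp only [Finset.mem_range, Nat.lt_succ_iff] at hi
  rw [← C_mul_X_pow_eq_monomial]
  have h1 : (C (-1:ℂ) * X + C 0)^i = C ((-1:ℂ)^i) * X^i := by
    rw [map_zero, add_zero, mul_pow, ← map_pow]
  have h2 : (C (0:ℂ) * X + C (-1:ℂ))^(n-i) = C ((-1:ℂ)^(n-i)) := by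
    rw [map_zero, zero_mul, zero_add, ← map_pow]
  rw [h1, h2, show ((-1:ℂ))^n = (-1)^i * (-1)^(n-i) by rw [← pow_add]; congr 1; omega,
    map_mul]
  ring

theorem act_reflect_coeff (n : ℕ) (e f : ℂ) (p : ℂ[X]) (j : ℕ) (hj : j ≤ n) :
    (act n 0 e f 0 p).coeff j = e^(n-j) * f^j * p.coeff (n-j) := by
  rw [act, finset_sum_coeff]
  have key : ∀ i ∈ Finset.range (n+1),
      (C (p.coeff i) * (C (0:ℂ) * X + C e)^i * (C f * X + C (0:ℂ))^(n-i)).coeff j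
      = if i = n - j then e^(n-j) * f^j * p.coeff (n-j) else 0 := by
    intro i hi
    simp only [Finset.mem_range, Nat.lt_succ_iff] at hi
    have h1 : (C (0:ℂ) * X + C e)^i = C (e^i) := by
      rw [map_zero, zero_mul, zero_add, ← map_pow]
    have h2 : (C f * X + C (0:ℂ))^(n-i) = C (f^(n-i)) * X^(n-i) := by
      rw [map_zero, add_zero, mul_pow, ← map_pow]
    rw [h1, h2, show C (p.coeff i) * C (e^i) * (C (f^(n-i)) * X^(n-i))
        = C (p.coeff i * e^i * f^(n-i)) * X^(n-i) by rw [map_mul, map_mul]; ring,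
      coeff_C_mul, coeff_X_pow]
    split_ifs with h h' h'
    · subst h'
      rw [show n - (n - j) = j by omega]
      ring
    · exact absurd (by omega : i = n - j) h'
    · exact absurd (by omega : j = n - i) h
    · ring
  rw [Finset.sum_congr rfl key, Finset.sum_ite_eq' (Finset.range (n+1)) (n-j)]
  simp [Nat.lt_succ_iff]

theorem hab_reflect (n : ℕ) (e f : ℂ) (hef : e * f = -1) (p q : ℂ[X]) :
    hab n (act n 0 e f 0 p) (act n 0 e f 0 q) = hab n p q := by
  have key : ∀ j ∈ Finset.range (n+1),
      (-1:ℂ)^j * ((n.choose j : ℂ))⁻¹ * (act n 0 e f 0 p).coeff j *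
        (act n 0 e f 0 q).coeff (n - j)
      = (fun j => (-1:ℂ)^(n+j) * ((n.choose j : ℂ))⁻¹ * p.coeff (n-j) * q.coeff j) j := by
    intro j hj
    dsimp only
    simp only [Finset.mem_range, Nat.lt_succ_iff] at hj
    rw [act_reflect_coeff n e f p j hj, act_reflect_coeff n e f q (n-j) (by omega),
      show n - (n - j) = j by omega]
    have : e^(n-j) * f^j * (e^j * f^(n-j)) = (-1:ℂ)^n := by
      rw [← hef]; rw [mul_pow]
      rw [show e^(n-j)*f^j*(e^j*f^(n-j)) = (e^(n-j)*e^j) * (f^(n-j)*f^j) by ring,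
        ← pow_add, ← pow_add, show n - j + j = n by omega]
    calc (-1:ℂ)^j * ((n.choose j:ℂ))⁻¹ * (e^(n-j)*f^j*p.coeff (n-j)) * (e^j*f^(n-j)*q.coeff j)
        = (e^(n-j) * f^j * (e^j * f^(n-j))) * ((-1)^j * ((n.choose j:ℂ))⁻¹ * p.coeff (n-j) * q.coeff j) := by ring
      _ = (-1:ℂ)^n * (-1)^j * ((n.choose j:ℂ))⁻¹ * p.coeff (n-j) * q.coeff j := by rw [this]; ring
      _ = (-1:ℂ)^(n+j) * ((n.choose j:ℂ))⁻¹ * p.coeff (n-j) * q.coeff j := by rw [pow_add]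
  rw [hab, Finset.sum_congr rfl key,
    ← Finset.sum_range_reflect (fun j => (-1:ℂ)^(n+j) * ((n.choose j : ℂ))⁻¹ * p.coeff (n-j) * q.coeff j) (n+1)]
  rw [hab]
  apply Finset.sum_congr rfl
  intro j hj
  simp only [Finset.mem_range, Nat.lt_succ_iff] at hj
  rw [show n + 1 - 1 - j = n - j by omega, show n - (n - j) = j by omega,
    Nat.choose_symm hj,
    show n + (n - j) = j + 2*(n-j) by omega, pow_add, pow_mul, neg_one_sq, one_pow, mul_one]

theorem hab_derivative (n : ℕ) (p q : ℂ[X]) (hp : p.natDegree ≤ n) (hq : q.natDegree ≤ n) :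
    hab n (derivative p) q = - hab n p (derivative q) := by
  have hp' : p.coeff (n+1) = 0 := coeff_eq_zero_of_natDegree_lt (by omega)
  have hq' : q.coeff (n+1) = 0 := coeff_eq_zero_of_natDegree_lt (by omega)
  rw [hab, hab, ← neg_eq_iff_eq_neg, ← Finset.sum_neg_distrib]
  rw [Finset.sum_range_succ, Finset.sum_range_succ']
  have hL : -((-1:ℂ)^n * ((n.choose n : ℂ))⁻¹ * (derivative p).coeff n * q.coeff (n - n)) = 0 := by
    simp [coeff_derivative, hp']
  have hR : (-1:ℂ)^0 * ((n.choose 0 : ℂ))⁻¹ * p.coeff 0 * (derivative q).coeff (n - 0) = 0 := by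
    simp [coeff_derivative, hq']
  rw [hL, hR, add_zero, add_zero]
  apply Finset.sum_congr rfl
  intro i hi
  simp only [Finset.mem_range] at hi
  have h0 : (n.choose i : ℂ) ≠ 0 := Nat.cast_ne_zero.2 (Nat.choose_pos (by omega)).ne'
  have h1 : (n.choose (i+1) : ℂ) ≠ 0 := Nat.cast_ne_zero.2 (Nat.choose_pos (by omega)).ne'
  have hkey : ((n.choose i : ℂ))⁻¹ * ((i:ℂ)+1) = ((n.choose (i+1) : ℂ))⁻¹ * ((n - i : ℕ) : ℂ) := by
    have h := Nat.choose_succ_right_eq n i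
    have h' : ((n.choose (i+1) : ℂ)) * ((i:ℂ)+1) = ((n.choose i : ℂ)) * ((n - i : ℕ) : ℂ) := by
      exact_mod_cast congrArg (Nat.cast : ℕ → ℂ) h
    field_simp
    linear_combination h'
  have hsub : n - (i+1) + 1 = n - i := by omega
  have hcast : ((n - (i+1) : ℕ) : ℂ) + 1 = ((n - i : ℕ) : ℂ) := by
    exact_mod_cast congrArg (Nat.cast : ℕ → ℂ) hsub
  rw [coeff_derivative, coeff_derivative, hsub, hcast]
  linear_combination (-(-1:ℂ)^i * p.coeff (i+1) * q.coeff (n-i)) * hkey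

theorem hab_iterate_derivative (n : ℕ) (p q : ℂ[X]) (hp : p.natDegree ≤ n)
    (hq : q.natDegree ≤ n) (m : ℕ) :
    hab n (derivative^[m] p) q = (-1)^m * hab n p (derivative^[m] q) := by
  induction m generalizing p with
  | zero => simp
  | succ m ih =>
    rw [Function.iterate_succ_apply, Function.iterate_succ_apply',
      ih (derivative p) (le_trans (natDegree_derivative_le p) (le_trans (Nat.sub_le _ _) hp)),
      hab_derivative n p (derivative^[m] q) hp
        (le_trans (natDegree_iterate_derivative q m) (by omega)),
      pow_succ]
    ring

theorem hab_nsmul_left (n : ℕ) (m : ℕ) (p q : ℂ[X]) :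
    hab n (m • p) q = (m : ℂ) * hab n p q := by
  simp only [hab, coeff_smul, smul_eq_mul, Finset.mul_sum]
  exact Finset.sum_congr rfl fun i _ => by ring

theorem hab_nsmul_right (n : ℕ) (m : ℕ) (p q : ℂ[X]) :
    hab n p (m • q) = (m : ℂ) * hab n p q := by
  simp only [hab, coeff_smul, smul_eq_mul, Finset.mul_sum]
  exact Finset.sum_congr rfl fun i _ => by ring

theorem natDegree_hasse_le (p : ℂ[X]) (m n : ℕ) (hp : p.natDegree ≤ n) :
    (hasseDeriv m p).natDegree ≤ n :=
  le_trans (natDegree_hasseDeriv_le p m) (le_trans (Nat.sub_le _ _) hp)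

theorem hab_hasse (n : ℕ) (p q : ℂ[X]) (hp : p.natDegree ≤ n) (hq : q.natDegree ≤ n) (m : ℕ) :
    hab n (hasseDeriv m p) q = (-1)^m * hab n p (hasseDeriv m q) := by
  have hm : ((m.factorial : ℂ)) ≠ 0 := Nat.cast_ne_zero.2 (Nat.factorial_ne_zero m)
  have h1 : hab n (m.factorial • hasseDeriv m p) q
      = (-1:ℂ)^m * hab n p (m.factorial • hasseDeriv m q) := by
    have e1 : m.factorial • hasseDeriv m p = derivative^[m] p := by
      have := Polynomial.factorial_smul_hasseDeriv (R := ℂ) (k := m)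
      exact congrFun this p
    have e2 : m.factorial • hasseDeriv m q = derivative^[m] q := by
      have := Polynomial.factorial_smul_hasseDeriv (R := ℂ) (k := m)
      exact congrFun this q
    rw [e1, e2]
    exact hab_iterate_derivative n p q hp hq m
  rw [hab_nsmul_left, hab_nsmul_right] at h1
  exact mul_left_cancel₀ hm (h1.trans (by ring))

theorem taylor_sum (n : ℕ) (t : ℂ) (p : ℂ[X]) (hp : p.natDegree ≤ n) :
    p.comp (X + C t) = ∑ m ∈ Finset.range (n+1), C (t^m) * hasseDeriv m p := by
  ext j
  rw [← taylor_apply, taylor_coeff,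
    eval_eq_sum_range' (lt_of_le_of_lt (natDegree_hasse_le p j n hp) (Nat.lt_succ_self n)),
    finset_sum_coeff]
  apply Finset.sum_congr rfl
  intro m hm
  rw [coeff_C_mul, hasseDeriv_coeff, hasseDeriv_coeff]
  rw [show m + j = j + m by omega]
  have : (j+m).choose j = (j+m).choose m := by
    have h := Nat.choose_symm (Nat.le_add_right j m)
    rw [show j + m - j = m by omega] at h
    exact h.symm
  rw [this]
  push_cast
  ring

theorem hab_comp_adjoint (n : ℕ) (t : ℂ) (p r : ℂ[X]) (hp : p.natDegree ≤ n)
    (hr : r.natDegree ≤ n) :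
    hab n (p.comp (X + C t)) r = hab n p (r.comp (X + C (-t))) := by
  rw [taylor_sum n t p hp, hab_sum_left, taylor_sum n (-t) r hr, hab_sum_right]
  apply Finset.sum_congr rfl
  intro m _
  rw [hab_C_mul_left, hab_C_mul_right, hab_hasse n p r hp hr m, neg_pow]
  ring

theorem natDegree_comp_translate (q : ℂ[X]) (t : ℂ) :
    (q.comp (X + C t)).natDegree = q.natDegree := by
  rw [← taylor_apply, natDegree_taylor]

theorem hab_comp_translate (n : ℕ) (t : ℂ) (p q : ℂ[X]) (hp : p.natDegree ≤ n)
    (hq : q.natDegree ≤ n) :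
    hab n (p.comp (X + C t)) (q.comp (X + C t)) = hab n p q := by
  rw [hab_comp_adjoint n t p _ hp (by rw [natDegree_comp_translate]; exact hq)]
  congr 1
  rw [comp_assoc]
  simp

theorem linear_zero_finite (c d : ℂ) (h : c ≠ 0 ∨ d ≠ 0) :
    {τ : ℂ | c*τ+d = 0}.Finite := by
  rcases eq_or_ne c 0 with hc | hc
  · subst hc
    have hd : d ≠ 0 := h.resolve_left (by simp)
    convert Set.finite_empty
    ext τ; simp [hd]
  · apply Set.Finite.subset (Set.finite_singleton (-d/c))
    intro τ hτ
    simp only [Set.mem_setOf_eq] at hτ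
    simp only [Set.mem_singleton_iff]
    field_simp
    linear_combination hτ

theorem act_cocycle (n : ℕ) (a1 b1 c1 d1 a2 b2 c2 d2 : ℂ) (p : ℂ[X]) (hp : p.natDegree ≤ n)
    (h2 : c2 ≠ 0 ∨ d2 ≠ 0) (h3 : c1*a2+d1*c2 ≠ 0 ∨ c1*b2+d1*d2 ≠ 0) :
    act n a2 b2 c2 d2 (act n a1 b1 c1 d1 p)
      = act n (a1*a2+b1*c2) (a1*b2+b1*d2) (c1*a2+d1*c2) (c1*b2+d1*d2) p := by
  apply eq_of_infinite_eval_eq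
  have hfin : ({τ : ℂ | c2*τ+d2 = 0} ∪ {τ : ℂ | (c1*a2+d1*c2)*τ+(c1*b2+d1*d2) = 0}).Finite :=
    (linear_zero_finite _ _ h2).union (linear_zero_finite _ _ h3)
  refine (hfin.infinite_compl).mono ?_
  intro τ hτ
  simp only [Set.compl_union, Set.mem_inter_iff, Set.mem_compl_iff, Set.mem_setOf_eq] at hτ
  obtain ⟨hτ2, hτ3⟩ := hτ
  simp only [Set.mem_setOf_eq]
  set u : ℂ := (a2*τ+b2)/(c2*τ+d2) with hu
  have key : c1 * u + d1 = ((c1*a2+d1*c2)*τ+(c1*b2+d1*d2))/(c2*τ+d2) := by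
    rw [hu, eq_div_iff hτ2, add_mul, mul_assoc, div_mul_cancel₀ _ hτ2]; ring
  have hτ1 : c1 * u + d1 ≠ 0 := by
    rw [key]; exact div_ne_zero hτ3 hτ2
  rw [act_eval n a2 b2 c2 d2 _ (act_natDegree_le n a1 b1 c1 d1 p) τ hτ2,
    act_eval n a1 b1 c1 d1 p hp _ hτ1,
    act_eval n _ _ _ _ p hp τ hτ3]
  have hmul : (c2*τ+d2) * (c1*u+d1) = (c1*a2+d1*c2)*τ+(c1*b2+d1*d2) := by
    rw [key, mul_div_cancel₀ _ hτ2]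
  have hv : (a1*u+b1)/(c1*u+d1) = ((a1*a2+b1*c2)*τ+(a1*b2+b1*d2))/((c1*a2+d1*c2)*τ+(c1*b2+d1*d2)) := by
    have key2 : a1*u + b1 = ((a1*a2+b1*c2)*τ+(a1*b2+b1*d2))/(c2*τ+d2) := by
      rw [hu, eq_div_iff hτ2, add_mul, mul_assoc, div_mul_cancel₀ _ hτ2]; ring
    rw [key2, key, div_div_div_cancel_right₀]
    exact hτ2
  rw [hv, ← mul_assoc, ← mul_pow, hmul]

theorem act_cocycle' (n : ℕ) (a1 b1 c1 d1 a2 b2 c2 d2 a3 b3 c3 d3 : ℂ) (p : ℂ[X])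
    (hp : p.natDegree ≤ n) (h2 : c2 ≠ 0 ∨ d2 ≠ 0) (h3 : c3 ≠ 0 ∨ d3 ≠ 0)
    (ha : a3 = a1*a2+b1*c2) (hb : b3 = a1*b2+b1*d2) (hc : c3 = c1*a2+d1*c2)
    (hd : d3 = c1*b2+d1*d2) :
    act n a2 b2 c2 d2 (act n a1 b1 c1 d1 p) = act n a3 b3 c3 d3 p := by
  subst ha hb hc hd
  exact act_cocycle n a1 b1 c1 d1 a2 b2 c2 d2 p hp h2 h3

theorem row_ne_zero {a b c d : ℂ} (h : a*d - b*c = 1) : c ≠ 0 ∨ d ≠ 0 := by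
  by_contra hcon
  push_neg at hcon
  rw [hcon.1, hcon.2] at h
  simp at h

theorem hab_act (n : ℕ) : ∀ N : ℕ, ∀ a b c d : ℤ, c.natAbs = N → a*d - b*c = 1 →
    ∀ p q : ℂ[X], p.natDegree ≤ n → q.natDegree ≤ n →
    hab n (act n (a:ℂ) (b:ℂ) (c:ℂ) (d:ℂ) p) (act n (a:ℂ) (b:ℂ) (c:ℂ) (d:ℂ) q)
      = hab n p q := by
  intro N
  induction N using Nat.strong_induction_on with
  | _ N IH =>
  intro a b c d hc hdet p q hp hq
  by_cases hc0 : c = 0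
  · subst hc0
    have had : a * d = 1 := by omega
    rcases Int.mul_eq_one_iff_eq_one_or_neg_one.mp had with ⟨ha, hd⟩ | ⟨ha, hd⟩
    · subst ha hd
      push_cast
      rw [act_translate n (b:ℂ) p hp, act_translate n (b:ℂ) q hq,
        hab_comp_translate n _ p q hp hq]
    · subst ha hd
      push_cast
      have ep := act_cocycle' n (-1) 0 0 (-1) 1 (-(b:ℂ)) 0 1 (-1) (b:ℂ) 0 (-1) p hp
        (Or.inr one_ne_zero) (Or.inr (by norm_num)) (by ring) (by ring) (by ring) (by ring)
      have eq' := act_cocycle' n (-1) 0 0 (-1) 1 (-(b:ℂ)) 0 1 (-1) (b:ℂ) 0 (-1) q hq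
        (Or.inr one_ne_zero) (Or.inr (by norm_num)) (by ring) (by ring) (by ring) (by ring)
      rw [← ep, ← eq', act_neg_one n p hp, act_neg_one n q hq,
        act_translate n (-(b:ℂ)) _ (le_trans (natDegree_C_mul_le _ _) hp),
        act_translate n (-(b:ℂ)) _ (le_trans (natDegree_C_mul_le _ _) hq),
        hab_comp_translate n _ _ _ (le_trans (natDegree_C_mul_le _ _) hp)
          (le_trans (natDegree_C_mul_le _ _) hq),
        hab_C_mul_left, hab_C_mul_right, ← mul_assoc, ← pow_add,
        show n + n = 2*n by ring, pow_mul, neg_one_sq, one_pow, one_mul]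
  · -- c ≠ 0
    set m : ℤ := a / c with hm
    set r : ℤ := a % c with hr0
    have hr : r = a - c * m := by rw [hr0, hm, Int.emod_def]
    have hrabs : r.natAbs < N := by
      have h1 : 0 ≤ r := Int.emod_nonneg a hc0
      have h2 : r < |c| := by
        rcases lt_trichotomy c 0 with h | h | h
        · rw [hr0, show c = -(-c) by ring, Int.emod_neg, abs_neg, abs_of_pos (by omega : (0:ℤ) < -c)]
          exact Int.emod_lt_of_pos a (by omega)
        · exact absurd h hc0
        · rw [hr0, abs_of_pos h]
          exact Int.emod_lt_of_pos a h
      have h3 : |c| = (c.natAbs : ℤ) := Int.abs_eq_natAbs c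
      omega
    have hdet3 : (-c) * (b - m*d) - (-d) * r = 1 := by
      rw [hr]; linear_combination hdet
    have hrC : (r:ℂ) = (a:ℂ) - (c:ℂ)*(m:ℂ) := by exact_mod_cast congrArg Int.cast hr
    have hdet3C : (↑(-c):ℂ) * (↑(b - m*d)) - (↑(-d)) * (↑r) = 1 := by
      exact_mod_cast congrArg Int.cast hdet3
    have hdetC : (a:ℂ)*(d:ℂ) - (b:ℂ)*(c:ℂ) = 1 := by exact_mod_cast congrArg Int.cast hdet
    -- step 1 : act x2 (act x1 p) = act (x1x2) p,  x1 = T^m, x2 = S⁻¹, x1x2 = (-m, 1, -1, 0)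
    have e1p := act_cocycle' n 1 (m:ℂ) 0 1 0 1 (-1) 0 (-(m:ℂ)) 1 (-1) 0 p hp
      (Or.inl (by norm_num)) (Or.inl (by norm_num)) (by ring) (by ring) (by ring) (by ring)
    have e1q := act_cocycle' n 1 (m:ℂ) 0 1 0 1 (-1) 0 (-(m:ℂ)) 1 (-1) 0 q hq
      (Or.inl (by norm_num)) (Or.inl (by norm_num)) (by ring) (by ring) (by ring) (by ring)
    -- step 2 : act x3 (act (x1x2) p) = act g p, x3 = (-c, -d, r, b - m*d)
    have e2p := act_cocycle' n (-(m:ℂ)) 1 (-1) 0 (↑(-c)) (↑(-d)) (↑r) (↑(b - m*d))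
      (a:ℂ) (b:ℂ) (c:ℂ) (d:ℂ) p hp (row_ne_zero hdet3C) (row_ne_zero hdetC)
      (by push_cast; linear_combination -hrC) (by push_cast; ring)
      (by push_cast; ring) (by push_cast; ring)
    have e2q := act_cocycle' n (-(m:ℂ)) 1 (-1) 0 (↑(-c)) (↑(-d)) (↑r) (↑(b - m*d))
      (a:ℂ) (b:ℂ) (c:ℂ) (d:ℂ) q hq (row_ne_zero hdet3C) (row_ne_zero hdetC)
      (by push_cast; linear_combination -hrC) (by push_cast; ring)
      (by push_cast; ring) (by push_cast; ring)
    rw [← e2p, ← e2q,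
      IH r.natAbs hrabs (-c) (-d) r (b - m*d) rfl hdet3 _ _
        (act_natDegree_le n _ _ _ _ _) (act_natDegree_le n _ _ _ _ _),
      ← e1p, ← e1q, hab_reflect n 1 (-1) (by norm_num),
      act_translate n (m:ℂ) p hp, act_translate n (m:ℂ) q hq,
      hab_comp_translate n _ p q hp hq]

/-- **invariance of the Haberland pairing.**  For `g = (a b; c d) ∈ SL(2, ℤ)` and
polynomials `p, q` of degree at most `k−2`, (i) `(p|_{2−k}g)(τ) = (cτ+d)^{k−2}·p(gτ)` is again a
polynomial of degree at most `k−2` (likewise for `q`), and (ii) the Haberland pairing is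
invariant: `⟨p|_{2−k}g, q|_{2−k}g⟩ = ⟨p, q⟩`. -/
theorem haberland_pairing_invariance (k : ℕ) (hk : 2 ≤ k)
    (a b c d : ℤ) (hdet : a * d - b * c = 1)
    (p q : Polynomial ℂ) (hp : p.natDegree ≤ k - 2) (hq : q.natDegree ≤ k - 2) :
    ∃ P Q : Polynomial ℂ,
      P.natDegree ≤ k - 2 ∧ Q.natDegree ≤ k - 2 ∧
      (∀ τ : ℂ, (c : ℂ) * τ + (d : ℂ) ≠ 0 →
        P.eval τ = ((c : ℂ) * τ + (d : ℂ)) ^ (k - 2) *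
          p.eval (((a : ℂ) * τ + (b : ℂ)) / ((c : ℂ) * τ + (d : ℂ)))) ∧
      (∀ τ : ℂ, (c : ℂ) * τ + (d : ℂ) ≠ 0 →
        Q.eval τ = ((c : ℂ) * τ + (d : ℂ)) ^ (k - 2) *
          q.eval (((a : ℂ) * τ + (b : ℂ)) / ((c : ℂ) * τ + (d : ℂ)))) ∧
      haberland k P Q = haberland k p q := by

  set n := k - 2 with hn
  have hk1 : k - 1 = n + 1 := by omega
  have hhab : ∀ P Q : ℂ[X], haberland k P Q = hab n P Q := by
    intro P Q
    rw [haberland, hab, hk1]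
  refine ⟨act n (a:ℂ) (b:ℂ) (c:ℂ) (d:ℂ) p, act n (a:ℂ) (b:ℂ) (c:ℂ) (d:ℂ) q,
    act_natDegree_le n _ _ _ _ p, act_natDegree_le n _ _ _ _ q, ?_, ?_, ?_⟩
  · intro τ hτ
    exact act_eval n _ _ _ _ p hp τ hτ
  · intro τ hτ
    exact act_eval n _ _ _ _ q hq τ hτ
  · rw [hhab, hhab]
    exact hab_act n c.natAbs a b c d rfl hdet p q hp hq
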